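/- Let L be a finite meet-semilattice, G a building set in L, and X ∈ L \ {0̂}. The map φ sending a nonempty nested set S to its join ⋁S is a well-defined order-preserving map from the face poset of N(L,G) to L \ {0̂}, and for every X ∈ L \ {0̂} the preimage φ^{-1}((L \ {0̂})_{≤X}) has contractible order complex. -/

import Mathlib

open scoped BigOperators

variable {L : Type*}

/-- The set of maximal elements of `G` below `X` (the `G`-factors of `X`). -/
def factorsSet [PartialOrder L] (G : Set L) (X : L) : Set L :=
  {g | g ∈ G ∧ g ≤ X ∧ ∀ h ∈ G, h ≤ X → g ≤ h → g = h}

/-- `G` is a building set in the meet-semilattice `L` with minimal element `⊥`: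
every element of `G` is nonminimal, and for every `X ≠ ⊥` there is a poset
isomorphism from the product of the lower intervals of the factors of `X`
to the lower interval of `X`, sending the `g`-th "unit vector" to `g`. -/
def IsBuilding (L : Type*) [PartialOrder L] [OrderBot L] (G : Set L) : Prop :=
  (∀ g ∈ G, g ≠ ⊥) ∧
  ∀ X : L, X ≠ ⊥ →
    ∃ φ : ((g : factorsSet G X) → Set.Icc (⊥ : L) g.1) ≃o Set.Icc (⊥ : L) X,
      ∀ (g : factorsSet G X) (u : (h : factorsSet G X) → Set.Icc (⊥ : L) h.1),
        (u g : L) = g.1 → (∀ h, h ≠ g → (u h : L) = (⊥ : L)) → ((φ u : L) = g.1)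

/-- A finite subset `S ⊆ G` is nested: every antichain in `S` of size at least 2
has a least upper bound in `L` which does not belong to `G`. -/
def IsNested [PartialOrder L] (G : Set L) (S : Finset L) : Prop :=
  ↑S ⊆ G ∧ ∀ A : Finset L, A ⊆ S → IsAntichain (· ≤ ·) (A : Set L) → 2 ≤ A.card →
    ∃ j, IsLUB (A : Set L) j ∧ j ∉ G

/-- The nested set complex, as the collection of its faces. -/
def nestedComplex [PartialOrder L] (G : Set L) : Set (Finset L) := {S | IsNested G S}

/-- The order complex of a poset: the collection of finite chains. -/
def chainComplex (V : Type*) [Preorder V] : Set (Finset V) :=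
  {S | IsChain (· ≤ ·) (S : Set V)}

/-- The order complex of `L \ {⊥}`, with vertex set inside `L`. -/
def orderComplexBot (L : Type*) [PartialOrder L] [OrderBot L] : Set (Finset L) :=
  {S | (S : Set L) ⊆ {x | x ≠ ⊥} ∧ IsChain (· ≤ ·) (S : Set L)}

/-- Geometric realization of an abstract simplicial complex (given by its set of
faces, as finsets of the vertex type `V`): convex combinations of vertices
supported on a face. -/
abbrev geomReal {V : Type*} (K : Set (Finset V)) : Type _ :=
  {f : V → ℝ // (∀ v, 0 ≤ f v) ∧ ∃ s ∈ K, (∀ v, f v ≠ 0 → v ∈ s) ∧ ∑ v ∈ s, f v = 1}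

/-- The subposet of the face poset of the nested set complex consisting of the
nonempty nested sets whose join is `≤ X`. -/
def NestedFiber [PartialOrder L] (G : Set L) (X : L) :=
  {S : Finset L // IsNested G S ∧ S.Nonempty ∧ ∃ j, IsLUB (S : Set L) j ∧ j ≤ X}

instance [PartialOrder L] (G : Set L) (X : L) : PartialOrder (NestedFiber G X) := by
  unfold NestedFiber; infer_instance

/-- The face poset of the nested set complex: nonempty nested sets ordered by inclusion. -/
def NestedFaces [PartialOrder L] (G : Set L) :=
  {S : Finset L // IsNested G S ∧ S.Nonempty}

instance [PartialOrder L] (G : Set L) : PartialOrder (NestedFaces G) := by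
  unfold NestedFaces; infer_instance

/-- The combinatorial blowup of a poset `M` at `X`: elements `Y` (marked `false`)
with `Y ≱ X`, and elements `Ŷ` (marked `true`) with `Y ≱ X` such that `Y ∨ X`
exists; ordered by `Y ≺ Z` iff `Y < Z`, `Ŷ ≺ Ẑ` iff `Y < Z`, `Y ≺ Ẑ` iff `Y ≤ Z`. -/
def Bl {M : Type*} [PartialOrder M] (X : M) :=
  {p : M × Bool // ¬ X ≤ p.1 ∧ (p.2 = true → ∃ j, IsLUB {p.1, X} j)}

noncomputable instance {M : Type*} [PartialOrder M] (X : M) : PartialOrder (Bl X) := by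
  unfold Bl; infer_instance

/-- The atoms of `L`, used as coordinates for the realization of nested set fans. -/
def Atoms (L : Type*) [PartialOrder L] [OrderBot L] := {a : L // IsAtom a}

open Classical in
/-- The characteristic vector of the set of atoms below `X`. -/
noncomputable def charVec [PartialOrder L] [OrderBot L] (X : L) : Atoms L → ℝ :=
  fun a => if a.1 ≤ X then 1 else 0

/-- The polyhedral cone spanned by the characteristic vectors of elements of `S`. -/
noncomputable def coneOf [PartialOrder L] [OrderBot L] (S : Finset L) : Set (Atoms L → ℝ) :=
  {y | ∃ c : L → ℝ, (∀ x, 0 ≤ c x) ∧ y = ∑ x ∈ S, c x • charVec x}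

/-- The fan associated to a building set: the cones spanned by the nested sets. -/
def fanOf [PartialOrder L] [OrderBot L] (G : Set L) : Set (Set (Atoms L → ℝ)) :=
  {C | ∃ S : Finset L, IsNested G S ∧ C = coneOf S}

/-- The cone generated by a ray `v` together with a cone `c`. -/
def rayJoin {E : Type*} [AddCommMonoid E] [Module ℝ E] (v : E) (c : Set E) : Set E :=
  {y | ∃ a : ℝ, ∃ x ∈ c, 0 ≤ a ∧ y = a • v + x}

/-- The stellar subdivision of a fan `F` at the cone `σ` with new ray `v`:
cones not containing `σ` are kept, and each cone `τ ⊇ σ` is replaced by the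
joins of `v` with the faces of `τ` not containing `σ`. -/
def stellarSub {E : Type*} [AddCommMonoid E] [Module ℝ E]
    (F : Set (Set E)) (σ : Set E) (v : E) : Set (Set E) :=
  {τ | τ ∈ F ∧ ¬ σ ⊆ τ} ∪
  {D | ∃ τ ∈ F, σ ⊆ τ ∧ ∃ c ∈ F, c ⊆ τ ∧ ¬ σ ⊆ c ∧ D = rayJoin v c}


section Topo

open Finset

open Classical in
noncomputable def RRv {P : Type*} [PartialOrder P] [Fintype P] (lam : P → ℝ) (v : P) : ℝ :=
  ∑ w ∈ univ.filter (fun w => v < w), lam w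

noncomputable def bbv {P : Type*} [PartialOrder P] [Fintype P] (t : ℝ) (lam : P → ℝ) (v : P) : ℝ :=
  min (lam v) (max 0 (t - RRv lam v))

open Classical in
noncomputable def pushv {P : Type*} [PartialOrder P] [Fintype P] (f : P → P) (lam : P → ℝ) : P → ℝ :=
  fun q => ∑ v ∈ univ.filter (fun v => f v = q), lam v

open Classical in
noncomputable def HHv {P : Type*} [PartialOrder P] [Fintype P] (f g : P → P) (t : ℝ)
    (lam : P → ℝ) : P → ℝ :=
  fun q => (∑ v ∈ univ.filter (fun v => f v = q), (lam v - bbv t lam v))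
    + ∑ v ∈ univ.filter (fun v => g v = q), bbv t lam v

variable {P : Type*} [PartialOrder P] [Fintype P]

lemma RRv_nonneg {lam : P → ℝ} (h : ∀ v, 0 ≤ lam v) (v : P) : 0 ≤ RRv lam v :=
  Finset.sum_nonneg fun w _ => h w

lemma bbv_nonneg {lam : P → ℝ} (h : ∀ v, 0 ≤ lam v) (t : ℝ) (v : P) : 0 ≤ bbv t lam v :=
  le_min (h v) (le_max_left 0 _)

lemma bbv_le (t : ℝ) (lam : P → ℝ) (v : P) : bbv t lam v ≤ lam v := min_le_left _ _

lemma HHv_nonneg (f g : P → P) (t : ℝ) {lam : P → ℝ} (h : ∀ v, 0 ≤ lam v) (q : P) :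
    0 ≤ HHv f g t lam q := by
  classical
  refine add_nonneg (Finset.sum_nonneg fun v _ => ?_) (Finset.sum_nonneg fun v _ => ?_)
  · exact sub_nonneg.2 (bbv_le t lam v)
  · exact bbv_nonneg h t v

open Classical in
lemma HHv_sum (f g : P → P) (t : ℝ) (lam : P → ℝ) :
    ∑ q ∈ univ, HHv f g t lam q = ∑ v ∈ univ, lam v := by
  unfold HHv
  rw [Finset.sum_add_distrib]
  rw [Finset.sum_fiberwise univ f (fun v => lam v - bbv t lam v),
    Finset.sum_fiberwise univ g (fun v => bbv t lam v)]
  rw [← Finset.sum_add_distrib]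
  simp

lemma bbv_zero {lam : P → ℝ} (h : ∀ v, 0 ≤ lam v) (v : P) : bbv 0 lam v = 0 := by
  unfold bbv
  have h1 : max 0 (0 - RRv lam v) = 0 := max_eq_left (by linarith [RRv_nonneg h v])
  rw [h1]
  exact min_eq_right (h v)

lemma bbv_one {lam : P → ℝ} (h : ∀ v, 0 ≤ lam v) (hsum : ∑ v ∈ univ, lam v = 1) (v : P) :
    bbv 1 lam v = lam v := by
  classical
  have hsub : insert v (univ.filter (fun w => v < w)) ⊆ univ := subset_univ _
  have hv : v ∉ univ.filter (fun w => v < w) := by simp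
  have hle : lam v + RRv lam v ≤ 1 := by
    have := Finset.sum_le_sum_of_subset_of_nonneg hsub (fun i _ _ => h i)
    rw [Finset.sum_insert hv, hsum] at this
    exact this
  unfold bbv
  have h1 : max 0 (1 - RRv lam v) = 1 - RRv lam v := max_eq_right (by linarith [h v])
  rw [h1]
  exact min_eq_left (by linarith)

open Classical in
lemma HHv_zero (f g : P → P) {lam : P → ℝ} (h : ∀ v, 0 ≤ lam v) :
    HHv f g 0 lam = pushv f lam := by
  funext q
  unfold HHv pushv
  have : ∀ v, bbv 0 lam v = 0 := bbv_zero h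
  simp [this]

open Classical in
lemma HHv_one (f g : P → P) {lam : P → ℝ} (h : ∀ v, 0 ≤ lam v)
    (hsum : ∑ v ∈ univ, lam v = 1) : HHv f g 1 lam = pushv g lam := by
  funext q
  unfold HHv pushv
  have : ∀ v, bbv 1 lam v = lam v := bbv_one h hsum
  simp [this]

/-- total mass over univ is 1 for a point of the realization -/
lemma total_one {lam : P → ℝ} {s : Finset P}
    (hsupp : ∀ v, lam v ≠ 0 → v ∈ s) (hsum : ∑ v ∈ s, lam v = 1) :
    ∑ v ∈ univ, lam v = 1 := by
  rw [← Finset.sum_subset (subset_univ s) (fun x _ hx => by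
    by_contra h; exact hx (hsupp x h))]
  exact hsum

lemma aux_a {t : ℝ} {lam : P → ℝ} (h : ∀ v, 0 ≤ lam v) {v : P}
    (ha : lam v - bbv t lam v ≠ 0) : 0 < lam v ∧ t - RRv lam v < lam v := by
  have hlt : bbv t lam v < lam v := lt_of_le_of_ne (bbv_le t lam v) (fun he => ha (by linarith))
  have h2 : max 0 (t - RRv lam v) < lam v := by
    by_contra hc
    push_neg at hc
    exact (ne_of_lt hlt) (min_eq_left hc)
  exact ⟨lt_of_le_of_lt (le_max_left 0 _) h2, lt_of_le_of_lt (le_max_right 0 _) h2⟩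

lemma aux_b {t : ℝ} {lam : P → ℝ} (h : ∀ v, 0 ≤ lam v) {v : P}
    (hb : bbv t lam v ≠ 0) : 0 < lam v ∧ RRv lam v < t := by
  have h0 : 0 < bbv t lam v := lt_of_le_of_ne (bbv_nonneg h t v) (Ne.symm hb)
  have h1 : 0 < lam v := lt_of_lt_of_le h0 (bbv_le t lam v)
  have h2 : 0 < max 0 (t - RRv lam v) := lt_of_lt_of_le h0 (min_le_right _ _)
  have h3 : 0 < t - RRv lam v := by
    rcases lt_max_iff.1 h2 with h' | h'
    · exact absurd h' (lt_irrefl 0)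
    · exact h'
  exact ⟨h1, by linarith⟩



lemma RRv_lt {lam : P → ℝ} (h : ∀ v, 0 ≤ lam v) {v w : P} (hwv : w < v) :
    lam v + RRv lam v ≤ RRv lam w := by
  classical
  have hv : v ∉ univ.filter (fun u => v < u) := by simp
  have hsub : insert v (univ.filter (fun u => v < u)) ⊆ univ.filter (fun u => w < u) := by
    intro u hu
    rcases Finset.mem_insert.1 hu with rfl | hu
    · simp [hwv]
    · simp only [Finset.mem_filter, Finset.mem_univ, true_and] at hu ⊢
      exact lt_trans hwv hu
  have := Finset.sum_le_sum_of_subset_of_nonneg hsub (fun i _ _ => h i)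
  rw [Finset.sum_insert hv] at this
  exact this

open Classical in
/-- the support of `HHv f g t lam` is a chain. -/
lemma HHv_chain (f g : P → P) (hf : Monotone f) (hg : Monotone g) (hfg : ∀ v, f v ≤ g v)
    (t : ℝ) {lam : P → ℝ} (h : ∀ v, 0 ≤ lam v) {s : Finset P}
    (hchain : IsChain (· ≤ ·) (s : Set P)) (hsupp : ∀ v, lam v ≠ 0 → v ∈ s)
    {q₁ q₂ : P} (h1 : HHv f g t lam q₁ ≠ 0) (h2 : HHv f g t lam q₂ ≠ 0) :
    q₁ ≤ q₂ ∨ q₂ ≤ q₁ := by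
  -- from nonzero value extract a witness
  have key : ∀ q : P, HHv f g t lam q ≠ 0 →
      ∃ v : P, (f v = q ∧ lam v - bbv t lam v ≠ 0) ∨ (g v = q ∧ bbv t lam v ≠ 0) := by
    intro q hq
    unfold HHv at hq
    rcases (by
      by_contra hcon
      push_neg at hcon
      exact hq (by rw [hcon.1, hcon.2, add_zero]) :
      (∑ v ∈ univ.filter (fun v => f v = q), (lam v - bbv t lam v)) ≠ 0 ∨
      (∑ v ∈ univ.filter (fun v => g v = q), bbv t lam v) ≠ 0) with hs | hs
    · obtain ⟨v, hv, hv0⟩ := Finset.exists_ne_zero_of_sum_ne_zero hs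
      exact ⟨v, Or.inl ⟨(Finset.mem_filter.1 hv).2, hv0⟩⟩
    · obtain ⟨v, hv, hv0⟩ := Finset.exists_ne_zero_of_sum_ne_zero hs
      exact ⟨v, Or.inr ⟨(Finset.mem_filter.1 hv).2, hv0⟩⟩
  obtain ⟨v, hv⟩ := key q₁ h1
  obtain ⟨w, hw⟩ := key q₂ h2
  have hvpos : 0 < lam v := by
    rcases hv with ⟨_, hv2⟩ | ⟨_, hv2⟩
    · exact (aux_a h hv2).1
    · exact (aux_b h hv2).1
  have hwpos : 0 < lam w := by
    rcases hw with ⟨_, hw2⟩ | ⟨_, hw2⟩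
    · exact (aux_a h hw2).1
    · exact (aux_b h hw2).1
  have hcomp : v ≤ w ∨ w ≤ v := by
    by_cases hvw : v = w
    · exact Or.inl (le_of_eq hvw)
    · exact hchain (hsupp v (ne_of_gt hvpos)) (hsupp w (ne_of_gt hwpos)) hvw
  rcases hv with ⟨hfv, hav⟩ | ⟨hgv, hbv⟩ <;> rcases hw with ⟨hfw, haw⟩ | ⟨hgw, hbw⟩
  · subst hfv; subst hfw
    rcases hcomp with h' | h'
    · exact Or.inl (hf h')
    · exact Or.inr (hf h')
  · subst hfv; subst hgw
    rcases hcomp with h' | h'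
    · exact Or.inl (le_trans (hf h') (hfg w))
    · rcases eq_or_lt_of_le h' with heq | hlt
      · subst heq; exact Or.inl (hfg _)
      · exfalso
        have ha1 := (aux_a h hav).2
        have hb1 := (aux_b h hbw).2
        have hR := RRv_lt h hlt
        linarith
  · subst hgv; subst hfw
    rcases hcomp with h' | h'
    · rcases eq_or_lt_of_le h' with heq | hlt
      · subst heq; exact Or.inr (hfg _)
      · exfalso
        have ha1 := (aux_a h haw).2
        have hb1 := (aux_b h hbv).2
        have hR := RRv_lt h hlt
        linarith
    · exact Or.inr (le_trans (hf h') (hfg v))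
  · subst hgv; subst hgw
    rcases hcomp with h' | h'
    · exact Or.inl (hg h')
    · exact Or.inr (hg h')

open Classical in
lemma HHv_mem (f g : P → P) (hf : Monotone f) (hg : Monotone g) (hfg : ∀ v, f v ≤ g v)
    (t : ℝ) (p : geomReal (chainComplex P)) :
    (∀ q, 0 ≤ HHv f g t p.1 q) ∧ ∃ s ∈ chainComplex P,
      (∀ q, HHv f g t p.1 q ≠ 0 → q ∈ s) ∧ ∑ q ∈ s, HHv f g t p.1 q = 1 := by
  obtain ⟨hpos, s, hs, hsupp, hsum⟩ := p.2
  refine ⟨HHv_nonneg f g t hpos, univ.filter (fun q => HHv f g t p.1 q ≠ 0), ?_,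
    fun q hq => by simp [hq], ?_⟩
  · intro q₁ hq₁ q₂ hq₂ hne
    have hq₁' : HHv f g t p.1 q₁ ≠ 0 := by
      have := Finset.mem_coe.1 hq₁; exact (Finset.mem_filter.1 this).2
    have hq₂' : HHv f g t p.1 q₂ ≠ 0 := by
      have := Finset.mem_coe.1 hq₂; exact (Finset.mem_filter.1 this).2
    exact HHv_chain f g hf hg hfg t hpos hs hsupp hq₁' hq₂'
  · rw [Finset.sum_filter_ne_zero, HHv_sum, total_one hsupp hsum]

lemma cont_lam (v : P) :
    Continuous fun tp : ↥unitInterval × geomReal (chainComplex P) => tp.2.1 v :=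
  (continuous_apply v).comp (continuous_subtype_val.comp continuous_snd)

open Classical in
lemma cont_bbv (v : P) :
    Continuous fun tp : ↥unitInterval × geomReal (chainComplex P) => bbv tp.1.1 tp.2.1 v := by
  unfold bbv RRv
  refine Continuous.min (cont_lam v) (Continuous.max continuous_const (Continuous.sub ?_ ?_))
  · exact continuous_subtype_val.comp continuous_fst
  · exact continuous_finset_sum _ (fun w _ => cont_lam w)

open Classical in
noncomputable def pushC (f : P → P) (hf : Monotone f) :
    C(geomReal (chainComplex P), geomReal (chainComplex P)) where
  toFun p := ⟨pushv f p.1, by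
    have := HHv_mem f f hf hf (fun v => le_refl (f v)) 0 p
    rwa [HHv_zero f f p.2.1] at this⟩
  continuous_toFun := by
    refine Continuous.subtype_mk ?_ _
    refine continuous_pi fun q => ?_
    unfold pushv
    exact continuous_finset_sum _ (fun v _ => (continuous_apply v).comp continuous_subtype_val)

open Classical in
noncomputable def pushHomotopy (f g : P → P) (hf : Monotone f) (hg : Monotone g)
    (hfg : ∀ v, f v ≤ g v) : (pushC f hf).Homotopy (pushC g hg) where
  toFun tp := ⟨HHv f g tp.1.1 tp.2.1, HHv_mem f g hf hg hfg tp.1.1 tp.2⟩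
  continuous_toFun := by
    refine Continuous.subtype_mk ?_ _
    refine continuous_pi fun q => ?_
    unfold HHv
    refine Continuous.add ?_ ?_
    · refine continuous_finset_sum _ (fun v _ => Continuous.sub (cont_lam v) (cont_bbv v))
    · exact continuous_finset_sum _ (fun v _ => cont_bbv v)
  map_zero_left p := Subtype.ext (by
    show HHv f g ((0 : unitInterval) : ℝ) p.1 = pushv f p.1
    rw [show ((0 : unitInterval) : ℝ) = 0 from rfl, HHv_zero f g p.2.1])
  map_one_left p := Subtype.ext (by
    show HHv f g ((1 : unitInterval) : ℝ) p.1 = pushv g p.1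
    obtain ⟨hpos, s, hs, hsupp, hsum⟩ := p.2
    rw [show ((1 : unitInterval) : ℝ) = 1 from rfl, HHv_one f g hpos (total_one hsupp hsum)])

open Classical in
noncomputable def vertexPt (x0 : P) : geomReal (chainComplex P) :=
  ⟨fun q => if q = x0 then 1 else 0, fun v => by dsimp only; split <;> norm_num,
    {x0}, by
      show IsChain (· ≤ ·) (({x0} : Finset P) : Set P)
      rw [Finset.coe_singleton]
      exact Set.subsingleton_singleton.isChain,
    fun v hv => by
      by_cases h : v = x0
      · simp [h]
      · simp [h] at hv,
    by simp⟩

open Classical in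
lemma pushC_id : pushC (fun v : P => v) monotone_id = ContinuousMap.id _ := by
  refine ContinuousMap.ext fun p => Subtype.ext (funext fun q => ?_)
  show ∑ v ∈ univ.filter (fun v => v = q), p.1 v = p.1 q
  rw [Finset.sum_eq_single_of_mem q (by simp)]
  intro b hb hbq
  exact absurd (Finset.mem_filter.1 hb).2 hbq

open Classical in
lemma pushC_const (x0 : P) :
    pushC (fun _ : P => x0) monotone_const = ContinuousMap.const _ (vertexPt x0) := by
  refine ContinuousMap.ext fun p => Subtype.ext (funext fun q => ?_)
  show ∑ v ∈ univ.filter (fun _ => x0 = q), p.1 v = ite (q = x0) 1 0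
  by_cases h : q = x0
  · subst h
    rw [if_pos rfl, Finset.filter_true_of_mem (fun _ _ => rfl)]
    obtain ⟨hpos, s, hs, hsupp, hsum⟩ := p.2
    exact total_one hsupp hsum
  · rw [if_neg h, Finset.filter_false_of_mem (fun _ _ he => h he.symm), Finset.sum_empty]

theorem contractible_of_conical (c : P → P) (hc : Monotone c) (x0 : P)
    (h1 : ∀ p, p ≤ c p) (h2 : ∀ p, x0 ≤ c p) :
    ContractibleSpace (geomReal (chainComplex P)) := by
  rw [contractible_iff_id_nullhomotopic]
  refine ⟨vertexPt x0, ?_⟩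
  have hA : (pushC (fun v : P => v) monotone_id).Homotopic (pushC c hc) :=
    ⟨pushHomotopy _ _ _ _ h1⟩
  have hB : (pushC (fun _ : P => x0) monotone_const).Homotopic (pushC c hc) :=
    ⟨pushHomotopy _ _ _ _ h2⟩
  have := hA.trans hB.symm
  rwa [pushC_id, pushC_const] at this


end Topo

section Building

variable [SemilatticeInf L] [OrderBot L]

open Classical in
noncomputable def unitVec {G : Set L} {X : L} (g0 : factorsSet G X) :
    (h : factorsSet G X) → Set.Icc (⊥ : L) h.1 :=
  fun h => if hh : h = g0 then ⟨g0.1, bot_le, by rw [hh]⟩ else ⟨⊥, le_rfl, bot_le⟩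

def botVec {G : Set L} {X : L} : (h : factorsSet G X) → Set.Icc (⊥ : L) h.1 :=
  fun _ => ⟨⊥, le_rfl, bot_le⟩

def topVec {G : Set L} {X : L} : (h : factorsSet G X) → Set.Icc (⊥ : L) h.1 :=
  fun h => ⟨h.1, bot_le, le_rfl⟩

variable {G : Set L} {X : L}
  (φ : ((g : factorsSet G X) → Set.Icc (⊥ : L) g.1) ≃o Set.Icc (⊥ : L) X)
  (hφ : ∀ (g : factorsSet G X) (u : (h : factorsSet G X) → Set.Icc (⊥ : L) h.1),
        (u g : L) = g.1 → (∀ h, h ≠ g → (u h : L) = (⊥ : L)) → ((φ u : L) = g.1))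

include φ hφ in
lemma phi_unit (g0 : factorsSet G X) : ((φ (unitVec g0) : L)) = g0.1 := by
  refine hφ g0 _ ?_ ?_
  · simp [unitVec]
  · intro h hh
    simp [unitVec, hh]

lemma phi_bot : ((φ (botVec (G := G) (X := X)) : L)) = ⊥ := by
  have h1 : (botVec : (h : factorsSet G X) → Set.Icc (⊥ : L) h.1) ≤
      φ.symm ⟨⊥, le_rfl, bot_le⟩ := by
    intro h
    show (⊥ : L) ≤ _
    exact bot_le
  have h2 := φ.monotone h1
  rw [OrderIso.apply_symm_apply] at h2
  exact le_antisymm (Subtype.coe_le_coe.2 h2) bot_le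

lemma phi_top : ((φ (topVec (G := G) (X := X)) : L)) = X := by
  have h2 : φ.symm ⟨X, bot_le, le_rfl⟩ ≤ topVec := by
    intro h
    show ((φ.symm ⟨X, bot_le, le_rfl⟩ : (k : factorsSet G X) → Set.Icc (⊥:L) k.1) h : L) ≤ h.1
    exact (φ.symm ⟨X, bot_le, le_rfl⟩ h).2.2
  have h3 := φ.monotone h2
  rw [OrderIso.apply_symm_apply] at h3
  exact le_antisymm (φ topVec).2.2 (Subtype.coe_le_coe.2 h3)

include φ hφ in
lemma support_le (g0 : factorsSet G X)
    (u : (h : factorsSet G X) → Set.Icc (⊥ : L) h.1) (hu : (φ u : L) ≤ g0.1) :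
    ∀ h, h ≠ g0 → (u h : L) = ⊥ := by
  intro h hh
  have h1 : (φ u : L) ≤ (φ (unitVec g0) : L) := by
    rw [phi_unit φ hφ g0]; exact hu
  have h2 : u ≤ unitVec g0 := φ.le_iff_le.1 (Subtype.coe_le_coe.1 h1)
  have h3 := h2 h
  rw [unitVec, dif_neg hh] at h3
  exact le_antisymm (Subtype.coe_le_coe.2 h3) bot_le

include φ hφ in
lemma factors_lub : IsLUB (factorsSet G X) X := by
  constructor
  · intro g hg
    exact hg.2.1
  · intro y hy
    set u := φ.symm ⟨y ⊓ X, bot_le, inf_le_right⟩ with hu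
    have hg0 : ∀ g0 : factorsSet G X, unitVec g0 ≤ u := by
      intro g0
      refine φ.le_iff_le.1 ?_
      rw [hu, OrderIso.apply_symm_apply]
      refine Subtype.coe_le_coe.1 ?_
      rw [phi_unit φ hφ g0]
      exact le_inf (hy g0.2) g0.2.2.1
    have hut : u = topVec := by
      funext g0
      apply Subtype.ext
      refine le_antisymm (u g0).2.2 ?_
      have h4 := Subtype.coe_le_coe.2 (hg0 g0 g0)
      rw [show ((unitVec g0 g0 : L)) = g0.1 by simp [unitVec]] at h4
      exact h4
    have h5 : φ u = ⟨y ⊓ X, bot_le, inf_le_right⟩ := by rw [hu, OrderIso.apply_symm_apply]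
    rw [hut] at h5
    have h6 := congrArg Subtype.val h5
    rw [phi_top φ] at h6
    calc X = y ⊓ X := h6
    _ ≤ y := inf_le_left

include φ in
lemma factors_nonempty (hX : X ≠ ⊥) : ∃ g, g ∈ factorsSet G X := by
  by_contra h
  push_neg at h
  have he : IsEmpty ↥(factorsSet G X) := ⟨fun g => h g.1 g.2⟩
  have ht : (topVec : (h : factorsSet G X) → Set.Icc (⊥ : L) h.1) = botVec :=
    funext fun g => he.elim g
  have h2 := phi_top φ
  rw [ht, phi_bot φ] at h2
  exact hX h2.symm

lemma le_factor [Fintype L] {h : L} (hhG : h ∈ G) (hhX : h ≤ X) :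
    ∃ g : factorsSet G X, h ≤ g.1 := by
  obtain ⟨m, hm, hmax⟩ := Set.Finite.exists_maximalFor id {k : L | k ∈ G ∧ k ≤ X ∧ h ≤ k}
    (Set.toFinite _) ⟨h, hhG, hhX, le_rfl⟩
  exact ⟨⟨m, hm.1, hm.2.1, fun k hk hkX hmk => le_antisymm hmk (hmax ⟨hk, hkX, le_trans hm.2.2 hmk⟩ hmk)⟩,
    hm.2.2⟩

include φ hφ in
lemma factor_unique {h : L} (hh : h ≠ ⊥) (g g' : factorsSet G X)
    (hg : h ≤ g.1) (hg' : h ≤ g'.1) : g = g' := by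
  by_contra hne
  set u := φ.symm ⟨h, bot_le, le_trans hg g.2.2.1⟩ with hu
  have hφu : (φ u : L) = h := by rw [hu, OrderIso.apply_symm_apply]
  have hs1 := support_le φ hφ g u (by rw [hφu]; exact hg)
  have hs2 := support_le φ hφ g' u (by rw [hφu]; exact hg')
  have hub : u = botVec := by
    funext k
    apply Subtype.ext
    by_cases hk : k = g
    · subst hk
      exact hs2 k (fun hkg => hne hkg)
    · exact hs1 k hk
  rw [hub, phi_bot φ] at hφu
  exact hh hφu.symm

include φ hφ in
lemma glue [Fintype L] (j : factorsSet G X → L) (hj : ∀ g, j g ≤ g.1) :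
    ∃ J : L, J ≤ X ∧ (∀ g, j g ≤ J) ∧ (∀ y, (∀ g, j g ≤ y) → J ≤ y) ∧
      (J ∈ G → J ≠ ⊥ → ∃ g0 : factorsSet G X, ∀ h, h ≠ g0 → j h = ⊥) := by
  have hjX : ∀ g, j g ≤ X := fun g => le_trans (hj g) g.2.2.1
  set v : factorsSet G X → ((h : factorsSet G X) → Set.Icc (⊥ : L) h.1) :=
    fun g => φ.symm ⟨j g, bot_le, hjX g⟩ with hv
  set u' : (h : factorsSet G X) → Set.Icc (⊥ : L) h.1 := fun g => v g g with hu'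
  have hφv : ∀ g, (φ (v g) : L) = j g := by
    intro g
    rw [hv]
    simp only
    rw [OrderIso.apply_symm_apply]
  have hsup : ∀ g h, h ≠ g → (v g h : L) = ⊥ := fun g =>
    support_le φ hφ g (v g) (by rw [hφv]; exact hj g)
  have hvu : ∀ g, v g ≤ u' := by
    intro g h
    by_cases hh : h = g
    · subst hh; exact le_rfl
    · refine Subtype.coe_le_coe.1 ?_
      rw [hsup g h hh]
      exact bot_le
  refine ⟨(φ u' : L), (φ u').2.2, ?_, ?_, ?_⟩
  · intro g
    rw [← hφv g]
    exact Subtype.coe_le_coe.2 (φ.monotone (hvu g))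
  · intro y hy
    have hw : u' ≤ φ.symm ⟨y ⊓ X, bot_le, inf_le_right⟩ := by
      intro g
      have h1 : v g ≤ φ.symm ⟨y ⊓ X, bot_le, inf_le_right⟩ := by
        rw [hv]
        simp only
        exact φ.symm.monotone (Subtype.mk_le_mk.2 (le_inf (hy g) (hjX g)))
      exact h1 g
    have h2 := φ.monotone hw
    rw [OrderIso.apply_symm_apply] at h2
    exact le_trans (Subtype.coe_le_coe.2 h2) inf_le_left
  · intro hJG hJne
    obtain ⟨g0, hg0⟩ := le_factor (X := X) hJG (φ u').2.2
    refine ⟨g0, fun h hh => ?_⟩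
    have h1 : (u' h : L) = ⊥ := support_le φ hφ g0 u' hg0 h hh
    have h2 : v h = botVec := by
      funext k
      apply Subtype.ext
      by_cases hk : k = h
      · subst hk; exact h1
      · exact hsup h k hk
    have h3 := hφv h
    rw [h2, phi_bot φ] at h3
    exact h3.symm

lemma nested_lub [Fintype L] {G : Set L} (hGbot : ∀ g ∈ G, g ≠ ⊥) {S : Finset L}
    (hS : IsNested G S) (hne : S.Nonempty) :
    ∃ j, IsLUB (S : Set L) j ∧ j ≠ ⊥ := by
  classical
  set M := S.filter (fun a => ∀ b ∈ S, a ≤ b → a = b) with hM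
  have hmax : ∀ s ∈ S, ∃ m ∈ M, s ≤ m := by
    intro s hs
    obtain ⟨m, hm, hmmax⟩ := Set.Finite.exists_maximalFor id {k : L | k ∈ S ∧ s ≤ k}
      (Set.toFinite _) ⟨s, hs, le_rfl⟩
    exact ⟨m, Finset.mem_filter.2 ⟨hm.1, fun b hb hmb =>
      le_antisymm hmb (hmmax ⟨hb, le_trans hm.2 hmb⟩ hmb)⟩, hm.2⟩
  have hMne : M.Nonempty := by
    obtain ⟨s, hs⟩ := hne
    obtain ⟨m, hm, _⟩ := hmax s hs
    exact ⟨m, hm⟩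
  have hMS : M ⊆ S := Finset.filter_subset _ _
  have hanti : IsAntichain (· ≤ ·) (M : Set L) := by
    intro a ha b hb hab hle
    have ha' := Finset.mem_filter.1 (Finset.mem_coe.1 ha)
    have hb' := Finset.mem_filter.1 (Finset.mem_coe.1 hb)
    exact hab (ha'.2 b hb'.1 hle)
  by_cases hcard : 2 ≤ M.card
  · obtain ⟨j, hj, hjG⟩ := hS.2 M hMS hanti hcard
    refine ⟨j, ⟨fun s hs => ?_, fun y hy => hj.2 (fun m hm =>
      hy (Finset.mem_coe.2 (hMS (Finset.mem_coe.1 hm))))⟩, ?_⟩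
    · obtain ⟨m, hm, hsm⟩ := hmax s (Finset.mem_coe.1 hs)
      exact le_trans hsm (hj.1 (Finset.mem_coe.2 hm))
    · obtain ⟨m, hm⟩ := hMne
      intro hbot
      have h1 : m ≤ j := hj.1 (Finset.mem_coe.2 hm)
      exact hGbot m (hS.1 (Finset.mem_coe.2 (hMS hm))) (le_bot_iff.1 (hbot ▸ h1))
  · have h1 : M.card = 1 := by
      have := Finset.card_pos.2 hMne
      omega
    obtain ⟨m, hm⟩ := Finset.card_eq_one.1 h1
    have hmM : m ∈ M := hm ▸ Finset.mem_singleton_self m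
    refine ⟨m, ⟨fun s hs => ?_, fun y hy => hy (Finset.mem_coe.2 (hMS hmM))⟩,
      hGbot m (hS.1 (Finset.mem_coe.2 (hMS hmM)))⟩
    obtain ⟨m', hm', hsm'⟩ := hmax s (Finset.mem_coe.1 hs)
    have : m' = m := by
      have := hm ▸ hm'
      exact Finset.mem_singleton.1 this
    exact this ▸ hsm'

include φ hφ in
lemma union_nested [Fintype L] [DecidableEq L] (hGbot : ∀ g ∈ G, g ≠ ⊥) {S : Finset L} (hS : IsNested G S)
    {jS : L} (hjS : IsLUB (S : Set L) jS) (hjSX : jS ≤ X) :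
    IsNested G (S ∪ (Set.toFinite (factorsSet G X)).toFinset) := by
  classical
  set Fc := (Set.toFinite (factorsSet G X)).toFinset with hFcdef
  have hFcmem : ∀ a : L, a ∈ Fc ↔ a ∈ factorsSet G X := fun a => Set.Finite.mem_toFinset _
  constructor
  · intro a ha
    rcases Finset.mem_union.1 (Finset.mem_coe.1 ha) with h | h
    · exact hS.1 (Finset.mem_coe.2 h)
    · exact ((hFcmem a).1 h).1
  · intro A hA hanti hcard
    have hAG : ∀ a ∈ A, a ∈ G := by
      intro a ha
      rcases Finset.mem_union.1 (hA ha) with h | h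
      · exact hS.1 (Finset.mem_coe.2 h)
      · exact ((hFcmem a).1 h).1
    have hAX : ∀ a ∈ A, a ≤ X := by
      intro a ha
      rcases Finset.mem_union.1 (hA ha) with h | h
      · exact le_trans (hjS.1 (Finset.mem_coe.2 h)) hjSX
      · exact ((hFcmem a).1 h).2.1
    have hAbot : ∀ a ∈ A, a ≠ ⊥ := fun a ha => hGbot a (hAG a ha)
    have key : ∀ g : factorsSet G X, ∃ jg : L, jg ≤ g.1 ∧
        ((A.filter (fun a => a ≤ g.1)).Nonempty →
          IsLUB ((A.filter (fun a => a ≤ g.1)) : Set L) jg ∧ jg ≠ ⊥) ∧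
        (¬ (A.filter (fun a => a ≤ g.1)).Nonempty → jg = ⊥) := by
      intro g
      by_cases hne : (A.filter (fun a => a ≤ g.1)).Nonempty
      · by_cases hgA : g.1 ∈ A
        · refine ⟨g.1, le_rfl, fun _ => ⟨⟨fun a ha =>
            (Finset.mem_filter.1 (Finset.mem_coe.1 ha)).2, fun y hy =>
            hy (Finset.mem_coe.2 (Finset.mem_filter.2 ⟨hgA, le_rfl⟩))⟩,
            hGbot g.1 g.2.1⟩, fun h => absurd hne h⟩
        · have hsub : A.filter (fun a => a ≤ g.1) ⊆ S := by
            intro a ha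
            have ha' := Finset.mem_filter.1 ha
            rcases Finset.mem_union.1 (hA ha'.1) with h | h
            · exact h
            · exfalso
              have hfac := (hFcmem a).1 h
              have he : a = g.1 := hfac.2.2 g.1 g.2.1 g.2.2.1 ha'.2
              exact hgA (he ▸ ha'.1)
          by_cases h2 : 2 ≤ (A.filter (fun a => a ≤ g.1)).card
          · obtain ⟨j, hj, hjG⟩ := hS.2 _ hsub
              (hanti.subset (Finset.coe_subset.2 (Finset.filter_subset _ _))) h2
            refine ⟨j, hj.2 (fun a ha =>
              (Finset.mem_filter.1 (Finset.mem_coe.1 ha)).2), fun _ => ⟨hj, ?_⟩,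
              fun h => absurd hne h⟩
            obtain ⟨a, ha⟩ := hne
            intro hjbot
            have h3 : a ≤ j := hj.1 (Finset.mem_coe.2 ha)
            exact hAbot a (Finset.mem_filter.1 ha).1 (le_bot_iff.1 (hjbot ▸ h3))
          · obtain ⟨a, ha⟩ := Finset.card_eq_one.1 (show (A.filter (fun a => a ≤ g.1)).card = 1 by
              have := Finset.card_pos.2 hne
              omega)
            have haA : a ∈ A.filter (fun x => x ≤ g.1) := ha ▸ Finset.mem_singleton_self a
            refine ⟨a, (Finset.mem_filter.1 haA).2, fun _ => ⟨⟨?_, ?_⟩, ?_⟩,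
              fun h => absurd hne h⟩
            · intro b hb
              have : b = a := by
                have := ha ▸ (Finset.mem_coe.1 hb)
                exact Finset.mem_singleton.1 this
              exact this ▸ le_rfl
            · intro y hy
              exact hy (Finset.mem_coe.2 haA)
            · exact hAbot a (Finset.mem_filter.1 haA).1
      · exact ⟨⊥, bot_le, fun h => absurd h hne, fun _ => rfl⟩
    choose j hj1 hj2 hj3 using key
    obtain ⟨J, hJX, hJub, hJleast, hJsupp⟩ := glue φ hφ j hj1
    have hAfac : ∀ a ∈ A, ∃ g : factorsSet G X, a ∈ A.filter (fun x => x ≤ g.1) := by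
      intro a ha
      obtain ⟨g, hg⟩ := le_factor (X := X) (hAG a ha) (hAX a ha)
      exact ⟨g, Finset.mem_filter.2 ⟨ha, hg⟩⟩
    have hJlub : IsLUB (A : Set L) J := by
      constructor
      · intro a ha
        obtain ⟨g, hg⟩ := hAfac a (Finset.mem_coe.1 ha)
        exact le_trans ((hj2 g ⟨a, hg⟩).1.1 (Finset.mem_coe.2 hg)) (hJub g)
      · intro y hy
        refine hJleast y (fun g => ?_)
        by_cases hne : (A.filter (fun x => x ≤ g.1)).Nonempty
        · exact (hj2 g hne).1.2 (fun b hb =>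
            hy (Finset.mem_coe.2 (Finset.filter_subset _ _ (Finset.mem_coe.1 hb))))
        · rw [hj3 g hne]
          exact bot_le
    refine ⟨J, hJlub, ?_⟩
    intro hJG
    have hJbot : J ≠ ⊥ := by
      obtain ⟨a, ha⟩ := Finset.card_pos.1 (by omega : 0 < A.card)
      intro h
      exact hAbot a ha (le_bot_iff.1 (h ▸ hJlub.1 (Finset.mem_coe.2 ha)))
    obtain ⟨g0, hg0⟩ := hJsupp hJG hJbot
    have hAg0 : ∀ a ∈ A, a ≤ g0.1 := by
      intro a ha
      obtain ⟨g, hg⟩ := hAfac a ha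
      by_cases hgg : g = g0
      · subst hgg
        exact (Finset.mem_filter.1 hg).2
      · exact absurd (hg0 g hgg) (hj2 g ⟨a, hg⟩).2
    by_cases hg0A : g0.1 ∈ A
    · have hle1 : A.card ≤ 1 := Finset.card_le_one.2 (fun a ha b hb => by
        have ha2 : a = g0.1 := by
          by_contra hne2
          exact hanti (Finset.mem_coe.2 ha) (Finset.mem_coe.2 hg0A) hne2 (hAg0 a ha)
        have hb2 : b = g0.1 := by
          by_contra hne2
          exact hanti (Finset.mem_coe.2 hb) (Finset.mem_coe.2 hg0A) hne2 (hAg0 b hb)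
        rw [ha2, hb2])
      omega
    · have hAS : A ⊆ S := by
        intro a ha
        rcases Finset.mem_union.1 (hA ha) with h | h
        · exact h
        · exfalso
          have hfac := (hFcmem a).1 h
          have he : a = g0.1 := hfac.2.2 g0.1 g0.2.1 g0.2.2.1 (hAg0 a ha)
          exact hg0A (he ▸ ha)
      obtain ⟨j', hj', hj'G⟩ := hS.2 A hAS hanti hcard
      exact hj'G (hJlub.unique hj' ▸ hJG)

end Building

/-- The map `S ↦ ⋁S` is a well-defined order-preserving map from
the face poset of `N(L,G)` to `L \ {⊥}`, and each fiber
`φ⁻¹((L \ {⊥})_{≤X})` has contractible order complex. -/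
theorem stmt7 (L : Type*) [SemilatticeInf L] [OrderBot L] [Fintype L]
    (G : Set L) (hG : IsBuilding L G) :
    (∀ S : Finset L, IsNested G S → S.Nonempty → ∃ j, IsLUB (S : Set L) j ∧ j ≠ ⊥) ∧
    (∀ S T : Finset L, IsNested G S → IsNested G T → S.Nonempty → S ⊆ T →
      ∀ jS jT : L, IsLUB (S : Set L) jS → IsLUB (T : Set L) jT → jS ≤ jT) ∧
    (∀ X : L, X ≠ ⊥ →
      ContractibleSpace (geomReal (chainComplex (NestedFiber G X)))) := by
  classical
  obtain ⟨hGbot, hbuild⟩ := hG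
  refine ⟨fun S hS hne => nested_lub hGbot hS hne, ?_, ?_⟩
  · intro S T hS hT hne hST jS jT hjS hjT
    exact hjS.2 (fun s hs => hjT.1 (Finset.coe_subset.2 hST hs))
  · intro X hX
    obtain ⟨φ, hφ⟩ := hbuild X hX
    set Fc := (Set.toFinite (factorsSet G X)).toFinset with hFcdef
    have hFcmem : ∀ a : L, a ∈ Fc ↔ a ∈ factorsSet G X := fun a => Set.Finite.mem_toFinset _
    have hFcLUB : IsLUB (Fc : Set L) X := by
      have h1 : (Fc : Set L) = factorsSet G X := Set.Finite.coe_toFinset _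
      rw [h1]
      exact factors_lub φ hφ
    have hFcne : Fc.Nonempty := by
      obtain ⟨g, hg⟩ := factors_nonempty φ hX
      exact ⟨g, (hFcmem g).2 hg⟩
    have hUnion : ∀ S : Finset L, IsNested G S → (∃ jS, IsLUB (S : Set L) jS ∧ jS ≤ X) →
        IsNested G (S ∪ Fc) := by
      rintro S hS ⟨jS, h1, h2⟩
      exact union_nested φ hφ hGbot hS h1 h2
    have hFcNested : IsNested G Fc := by
      have he : IsNested G (∅ : Finset L) := by
        refine ⟨by simp, fun A hA _ hcard => ?_⟩
        have h0 : A = ∅ := Finset.subset_empty.1 hA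
        rw [h0] at hcard
        simp at hcard
      have h1 := hUnion ∅ he ⟨⊥, by simpa using isLUB_empty, bot_le⟩
      rwa [Finset.empty_union] at h1
    haveI : Finite (NestedFiber G X) := by
      unfold NestedFiber
      exact Subtype.finite
    haveI : Fintype (NestedFiber G X) := Fintype.ofFinite _
    have hcS : ∀ S : NestedFiber G X,
        IsNested G (S.1 ∪ Fc) ∧ (S.1 ∪ Fc).Nonempty ∧
          ∃ j, IsLUB ((S.1 ∪ Fc : Finset L) : Set L) j ∧ j ≤ X := by
      intro S
      obtain ⟨hSn, hSne, jS, hjS, hjSX⟩ := S.2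
      refine ⟨hUnion S.1 hSn ⟨jS, hjS, hjSX⟩, hFcne.mono Finset.subset_union_right, X, ⟨?_, ?_⟩, le_rfl⟩
      · intro a ha
        rcases Finset.mem_union.1 (Finset.mem_coe.1 ha) with h | h
        · exact le_trans (hjS.1 (Finset.mem_coe.2 h)) hjSX
        · exact ((hFcmem a).1 h).2.1
      · intro y hy
        refine hFcLUB.2 (fun f hf => ?_)
        exact hy (Finset.mem_coe.2 (Finset.mem_union_right _ (Finset.mem_coe.1 hf)))
    let c : NestedFiber G X → NestedFiber G X := fun S => ⟨S.1 ∪ Fc, hcS S⟩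
    have hmono : Monotone c := by
      intro S T h
      show (S.1 ∪ Fc) ⊆ (T.1 ∪ Fc)
      exact Finset.union_subset_union h (subset_refl Fc)
    have hle : ∀ S : NestedFiber G X, S ≤ c S := by
      intro S
      show S.1 ⊆ S.1 ∪ Fc
      exact Finset.subset_union_left
    set x0 : NestedFiber G X := ⟨Fc, hFcNested, hFcne, X, hFcLUB, le_rfl⟩ with hx0
    have hge : ∀ S : NestedFiber G X, x0 ≤ c S := by
      intro S
      show Fc ⊆ S.1 ∪ Fc
      exact Finset.subset_union_right
    exact contractible_of_conical c hmono x0 hle hge
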